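/- Let Ψ : (ℝ³∖{0}) × ℝ³ → ℝ be differentiable and define F_Ψ(u, u̇) = 3((u̇·u)/‖u‖²)·u̇ − 3((u̇·u)²/‖u‖⁴)·u − m·(u × u̇) + Ψ(u, u̇)·u. Then for all u ≠ 0 and all u̇ ∈ ℝ³ the identity 3u̇ − (∂F_Ψ/∂u̇)(u, u̇)[u] = 3·λ(u, u̇)·u holds, where (∂F_Ψ/∂u̇)(u, u̇)[u] is the partial Fréchet derivative of F_Ψ in the second slot applied to the vector u, and λ(u, u̇) = (u·u̇)/‖u‖² − (1/3)·u·∇_{u̇}Ψ(u, u̇). -/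

import Mathlib

noncomputable section
open RealInnerProductSpace

/-- Three-dimensional Euclidean space. -/
abbrev E3 := EuclideanSpace ℝ (Fin 3)

/-- The cross product on ℝ³. -/
def cross (a b : E3) : E3 :=
  (WithLp.equiv 2 (Fin 3 → ℝ)).symm
    ![a 1 * b 2 - a 2 * b 1, a 2 * b 0 - a 0 * b 2, a 0 * b 1 - a 1 * b 0]

/-- The Euler–Poisson expression
𝓔(u, u̇, ü) = (ü × u)/‖u‖³ − 3((u̇·u)/‖u‖⁵)(u̇ × u) + (m/‖u‖³)(‖u‖² u̇ − (u̇·u) u). -/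
def EP (m : ℝ) (u du ddu : E3) : E3 :=
  (‖u‖ ^ 3)⁻¹ • cross ddu u - (3 * ⟪du, u⟫ / ‖u‖ ^ 5) • cross du u
    + (m / ‖u‖ ^ 3) • (‖u‖ ^ 2 • du - ⟪du, u⟫ • u)

/-- The right-hand side F_Ψ(u, u̇) of the equation solved for the third derivative,
for an arbitrary supplementary function Ψ. -/
def FPsi (m : ℝ) (Ψ : E3 × E3 → ℝ) (u du : E3) : E3 :=
  (3 * (⟪du, u⟫ / ‖u‖ ^ 2)) • du - (3 * (⟪du, u⟫ ^ 2 / ‖u‖ ^ 4)) • u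
    - m • cross u du + Ψ (u, du) • u

def crossL (u : E3) : E3 →L[ℝ] E3 :=
  LinearMap.toContinuousLinearMap
  { toFun := fun w => cross u w
    map_add' := by
      intro a b
      ext i
      fin_cases i <;> simp [cross, WithLp.equiv_symm_apply] <;> ring
    map_smul' := by
      intro c a
      ext i
      fin_cases i <;> simp [cross, WithLp.equiv_symm_apply] <;> ring }

lemma crossL_apply (u w : E3) : crossL u w = cross u w := rfl

lemma cross_self' (u : E3) : cross u u = 0 := by
  ext i
  fin_cases i <;> simp [cross, WithLp.equiv_symm_apply] <;> ring


/-- the reducibility identity 3u̇ − (∂F_Ψ/∂u̇)[u] = 3λ·u with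
λ = (u·u̇)/‖u‖² − (1/3)·u·∇_{u̇}Ψ. -/
theorem FPsi_reducibility_lambda (m : ℝ) (Ψ : E3 × E3 → ℝ)
    (hΨ : ∀ (u du : E3), u ≠ 0 → DifferentiableAt ℝ Ψ (u, du))
    (u du : E3) (hu : u ≠ 0) :
    (3 : ℝ) • du - fderiv ℝ (fun w => FPsi m Ψ u w) du u
      = (3 * (⟪u, du⟫ / ‖u‖ ^ 2
          - (1 / 3) * ⟪u, gradient (fun w => Ψ (u, w)) du⟫)) • u := by
  have hn : ‖u‖ ≠ 0 := norm_ne_zero_iff.mpr hu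
  have hΨdu : DifferentiableAt ℝ (fun w => Ψ (u, w)) du :=
    (hΨ u du hu).comp du ((differentiableAt_const u).prodMk differentiableAt_id)
  set D : E3 →L[ℝ] ℝ := fderiv ℝ (fun w => Ψ (u, w)) du with hD
  -- derivatives of the pieces
  have hc1 : HasFDerivAt (fun w : E3 => (3 / ‖u‖ ^ 2) * ⟪u, w⟫)
      ((3 / ‖u‖ ^ 2) • innerSL ℝ u) du :=
    (innerSL ℝ u).hasFDerivAt.const_smul (3 / ‖u‖ ^ 2)
  have h1 := hc1.smul (hasFDerivAt_id du)
  have hc2 : HasFDerivAt (fun w : E3 => (3 / ‖u‖ ^ 4) * (⟪u, w⟫ * ⟪u, w⟫))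
      ((3 / ‖u‖ ^ 4) • (⟪u, du⟫ • innerSL ℝ u + ⟪u, du⟫ • innerSL ℝ u)) du := by
    have h := (innerSL ℝ u).hasFDerivAt (x := du)
    exact (h.mul h).const_smul (3 / ‖u‖ ^ 4)
  have h2 := hc2.smul_const u
  have h3 : HasFDerivAt (fun w : E3 => m • crossL u w) (m • crossL u) du :=
    (crossL u).hasFDerivAt.const_smul m
  have h4 := hΨdu.hasFDerivAt.smul_const u
  have hg : HasFDerivAt (fun w : E3 =>
      ((3 / ‖u‖ ^ 2) * ⟪u, w⟫) • w - ((3 / ‖u‖ ^ 4) * (⟪u, w⟫ * ⟪u, w⟫)) • u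
        - m • crossL u w + Ψ (u, w) • u)
      ((((3 / ‖u‖ ^ 2) * ⟪u, du⟫) • ContinuousLinearMap.id ℝ E3
          + ((3 / ‖u‖ ^ 2) • innerSL ℝ u).smulRight du)
        - ((3 / ‖u‖ ^ 4) • (⟪u, du⟫ • innerSL ℝ u + ⟪u, du⟫ • innerSL ℝ u)).smulRight u
        - m • crossL u + D.smulRight u) du := ((h1.sub h2).sub h3).add h4
  have hfun : (fun w => FPsi m Ψ u w) = fun w : E3 =>
      ((3 / ‖u‖ ^ 2) * ⟪u, w⟫) • w - ((3 / ‖u‖ ^ 4) * (⟪u, w⟫ * ⟪u, w⟫)) • u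
        - m • crossL u w + Ψ (u, w) • u := by
    funext w
    rw [FPsi, real_inner_comm w u, crossL_apply]
    ring_nf
  rw [hfun, hg.fderiv]
  have hgrad : ⟪u, gradient (fun w => Ψ (u, w)) du⟫ = D u := by
    rw [real_inner_comm, gradient, InnerProductSpace.toDual_symm_apply]
  rw [hgrad]
  simp only [ContinuousLinearMap.add_apply, ContinuousLinearMap.sub_apply,
    ContinuousLinearMap.smul_apply, ContinuousLinearMap.smulRight_apply,
    ContinuousLinearMap.id_apply, innerSL_apply_apply, crossL_apply, cross_self',
    smul_eq_mul, real_inner_self_eq_norm_sq, smul_zero]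
  match_scalars <;> field_simp <;> ring
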